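/- Let C be a category with finite products, ◇ : C → C a pointed endofunctor with point p : Id ⟶ ◇, and † a family of operations †_{X,Y} : Hom(◇X × Y, X) → Hom(Y, X). For each object X define f_X = ◇π_r × id_X : ◇(◇X × X) × X → ◇X × X and q_X = π_ℓ ∘ f_X† : X → ◇X. If † satisfies the fixpoint identity (every f† satisfies f† = f ∘ (p_X × id_Y) ∘ ⟨f†, id_Y⟩), then q_X = p_X for every object X. -/

import Mathlib

open CategoryTheory CategoryTheory.Limits

universe v u

variable {C : Type u} [Category.{v} C] [HasFiniteProducts C]

/-- `f_X = ◇π_r × id_X : ◇(◇X × X) × X ⟶ ◇X × X`. -/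
noncomputable def fAux (D : C ⥤ C) (X : C) :
    D.obj (D.obj X ⨯ X) ⨯ X ⟶ D.obj X ⨯ X :=
  prod.map (D.map prod.snd) (𝟙 X)

/-- If an operator `† : Hom(◇X × Y, X) → Hom(Y, X)` satisfies the fixpoint identity, then
`q_X = π_ℓ ∘ (f_X)† : X ⟶ ◇X` coincides with the point `p_X` for every object `X`. -/
theorem q_eq_point (D : C ⥤ C) (p : 𝟭 C ⟶ D)
    (dag : ∀ {X Y : C}, (D.obj X ⨯ Y ⟶ X) → (Y ⟶ X))
    -- (†) fixpoint identity
    (hfix : ∀ {X Y : C} (f : D.obj X ⨯ Y ⟶ X),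
      dag f = prod.lift (dag f) (𝟙 Y) ≫ prod.map (p.app X) (𝟙 Y) ≫ f) :
    ∀ X : C, dag (fAux D X) ≫ prod.fst = p.app X := by
  intro X
  have h := hfix (fAux D X)
  have hsnd : dag (fAux D X) ≫ prod.snd = 𝟙 X := by
    conv_lhs => rw [h]
    simp [fAux]
    exact prod.lift_snd _ _
  conv_lhs => rw [h]
  simp only [fAux, Category.assoc, prod.map_fst, prod.lift_map_assoc,
    Category.comp_id]
  have hn := p.naturality (prod.snd : D.obj X ⨯ X ⟶ X)
  simp only [Functor.id_map] at hn
  simp only [fAux] at hsnd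
  rw [prod.lift_fst_assoc, Category.assoc, ← hn, ← Category.assoc, hsnd, Category.id_comp]
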